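/- Let P* be a probability distribution on A² (A finite) satisfying Akin's condition for the imitate-if-better strategy of player a in a two-player symmetric potential game: Σ_{σ'} P*(σ') T̂_a(σ_a|σ') = 0 for all σ_a. Then ⟨(s_a - s_{-a}) · 1[s_{-a} > s_a]⟩* = 0; equivalently, P* assigns zero probability to the set of states σ' with s_{-a}(σ') > s_a(σ'). -/
import Mathlib


/-- If `P*` satisfies Akin's condition for the imitate-if-better strategy of player 1 in
a symmetric potential game, then `⟨(s1 - s2)·1[s2 > s1]⟩* = 0`, and `P*` assigns zero
probability to every state where `s2 > s1`. -/
theorem stmt18 {M : ℕ} (s1 s2 : Fin M × Fin M → ℝ)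
    (hsym : ∀ i j, s2 (i, j) = s1 (j, i))
    (c : Fin M → ℝ)
    (hc : ∀ i j, (s1 (i, j) - s1 (j, i)) / 2 = c j - c i)
    (T1 : Fin M → Fin M × Fin M → ℝ)
    (hT1 : ∀ σ σ', T1 σ σ' =
      if s2 σ' > s1 σ' then (if σ = σ'.2 then 1 else 0) else (if σ = σ'.1 then 1 else 0))
    (Pstar : Fin M × Fin M → ℝ)
    (hpos : ∀ σ, 0 ≤ Pstar σ) (hsum : ∑ σ : Fin M × Fin M, Pstar σ = 1)
    (hAkin : ∀ σa : Fin M, ∑ σ' : Fin M × Fin M,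
      Pstar σ' * (T1 σa σ' - if σa = σ'.1 then 1 else 0) = 0) :
    (∑ σ : Fin M × Fin M,
      ((s1 σ - s2 σ) * (if s2 σ > s1 σ then 1 else 0)) * Pstar σ = 0) ∧
    (∀ σ : Fin M × Fin M, s2 σ > s1 σ → Pstar σ = 0) := by
  have hdiff : ∀ σ : Fin M × Fin M, c σ.2 - c σ.1 = (s1 σ - s2 σ) / 2 := by
    intro σ
    have h := hc σ.1 σ.2
    have h2 := hsym σ.1 σ.2
    simp only [Prod.mk.eta] at h h2
    rw [h2]; linarith
  have key : ∑ σ : Fin M × Fin M,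
      Pstar σ * ((if s2 σ > s1 σ then c σ.2 else c σ.1) - c σ.1) = 0 := by
    have h0 : ∑ σa : Fin M, ∑ σ' : Fin M × Fin M,
        c σa * (Pstar σ' * (T1 σa σ' - if σa = σ'.1 then 1 else 0)) = 0 := by
      apply Finset.sum_eq_zero
      intro σa _
      rw [← Finset.mul_sum, hAkin σa, mul_zero]
    rw [Finset.sum_comm] at h0
    rw [← h0]
    apply Finset.sum_congr rfl
    intro σ _
    by_cases h : s2 σ > s1 σ <;>
      simp [hT1, h, mul_sub, Finset.mul_sum, mul_ite, mul_one, mul_zero,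
        Finset.sum_ite_eq', mul_comm, mul_left_comm] <;> ring
  have key2 : ∑ σ : Fin M × Fin M,
      ((s1 σ - s2 σ) * (if s2 σ > s1 σ then 1 else 0)) * Pstar σ = 0 := by
    have : ∑ σ : Fin M × Fin M,
        ((s1 σ - s2 σ) * (if s2 σ > s1 σ then 1 else 0)) * Pstar σ
        = 2 * ∑ σ : Fin M × Fin M,
          Pstar σ * ((if s2 σ > s1 σ then c σ.2 else c σ.1) - c σ.1) := by
      rw [Finset.mul_sum]
      apply Finset.sum_congr rfl
      intro σ _
      by_cases h : s2 σ > s1 σ <;> simp [h]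
      rw [hdiff σ]; ring
    rw [this, key, mul_zero]
  refine ⟨key2, ?_⟩
  have hnonpos : ∀ σ ∈ Finset.univ,
      ((s1 σ - s2 σ) * (if s2 σ > s1 σ then 1 else 0)) * Pstar σ ≤ 0 := by
    intro σ _
    by_cases h : s2 σ > s1 σ <;> simp [h]
    · exact mul_nonpos_of_nonpos_of_nonneg (by linarith) (hpos σ)
  have hall := (Finset.sum_eq_zero_iff_of_nonpos hnonpos).mp key2
  intro σ hσ
  have := hall σ (Finset.mem_univ σ)
  simp [hσ] at this
  rcases this with h | h
  · linarith
  · exact h
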